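/- If u is a vertex of degree 1 in a finite graph G with unique neighbour v, then Z(G) = −Z(G \ N[v]), where Z(G) = 1 − χ(Ind(G)). -/

import Mathlib

open scoped Classical

noncomputable section

/-- The (unreduced) Euler characteristic of the independence complex `Ind(G)`. -/
def eulerCharInd {V : Type*} [Fintype V] (G : SimpleGraph V) : ℤ :=
  ∑ s ∈ Finset.univ.filter
      (fun s : Finset V => s.Nonempty ∧ ∀ u ∈ s, ∀ w ∈ s, ¬ G.Adj u w),
    (-1 : ℤ) ^ (s.card - 1)

/-- The Witten index `Z(G) = 1 - χ(Ind(G))`. -/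
def wittenInd {V : Type*} [Fintype V] (G : SimpleGraph V) : ℤ := 1 - eulerCharInd G

lemma wittenInd_eq {V : Type*} [Fintype V] (G : SimpleGraph V) :
    wittenInd G = ∑ s ∈ Finset.univ.filter
      (fun s : Finset V => ∀ u ∈ s, ∀ w ∈ s, ¬ G.Adj u w), (-1 : ℤ) ^ s.card := by
  classical
  have hins : (Finset.univ.filter
      (fun s : Finset V => ∀ u ∈ s, ∀ w ∈ s, ¬ G.Adj u w))
      = insert (∅ : Finset V) (Finset.univ.filter
          (fun s : Finset V => s.Nonempty ∧ ∀ u ∈ s, ∀ w ∈ s, ¬ G.Adj u w)) := by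
    ext s
    simp only [Finset.mem_filter, Finset.mem_univ, true_and, Finset.mem_insert]
    constructor
    · intro hs
      rcases s.eq_empty_or_nonempty with rfl | hne
      · exact Or.inl rfl
      · exact Or.inr ⟨hne, hs⟩
    · rintro (rfl | ⟨-, hs⟩)
      · simp
      · exact hs
  have hnotmem : (∅ : Finset V) ∉ Finset.univ.filter
      (fun s : Finset V => s.Nonempty ∧ ∀ u ∈ s, ∀ w ∈ s, ¬ G.Adj u w) := by
    simp
  rw [hins, Finset.sum_insert hnotmem]
  unfold wittenInd eulerCharInd
  have key : ∀ s ∈ Finset.univ.filter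
      (fun s : Finset V => s.Nonempty ∧ ∀ u ∈ s, ∀ w ∈ s, ¬ G.Adj u w),
      ((-1 : ℤ) ^ s.card) = -((-1 : ℤ) ^ (s.card - 1)) := by
    intro s hs
    simp only [Finset.mem_filter] at hs
    have hc : 1 ≤ s.card := Finset.card_pos.mpr hs.2.1
    obtain ⟨c, hc'⟩ : ∃ c, s.card = c + 1 := ⟨s.card - 1, by omega⟩
    rw [hc', Nat.add_sub_cancel, pow_succ]
    ring
  rw [Finset.sum_congr rfl key, Finset.sum_neg_distrib]
  simp only [Finset.card_empty, pow_zero]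
  ring

set_option maxHeartbeats 1000000 in
/-- If `u` is a vertex of degree 1 in a finite graph `G` with unique neighbour `v`
(i.e. `N(u) = {v}`), then `Z(G) = -Z(G \ N[v])`. -/
theorem stmt_5 {V : Type*} [Fintype V] (G : SimpleGraph V) (u v : V)
    (h : G.neighborSet u = {v}) :
    wittenInd G = - wittenInd (G.induce ((G.neighborSet v ∪ {v})ᶜ)) := by
  classical
  have hadj : G.Adj u v := by
    have : v ∈ G.neighborSet u := by rw [h]; rfl
    exact this
  have huv : u ≠ v := hadj.ne
  have huniq : ∀ w, G.Adj u w → w = v := fun w hw => by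
    have : w ∈ G.neighborSet u := hw
    rwa [h, Set.mem_singleton_iff] at this
  set U : Set V := (G.neighborSet v ∪ {v})ᶜ with hUdef
  have hUmem : ∀ w, w ∈ U ↔ ¬ G.Adj v w ∧ w ≠ v := by
    intro w
    simp only [hUdef, Set.mem_compl_iff, Set.mem_union, Set.mem_singleton_iff,
      SimpleGraph.mem_neighborSet, not_or]
  have hvU : v ∉ U := by rw [hUmem]; simp
  rw [wittenInd_eq]
  rw [← Finset.sum_filter_add_sum_filter_not
      (Finset.univ.filter (fun s : Finset V => ∀ a ∈ s, ∀ b ∈ s, ¬ G.Adj a b))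
      (fun s => v ∈ s)]
  have hcancel : ∑ s ∈ (Finset.univ.filter
      (fun s : Finset V => ∀ a ∈ s, ∀ b ∈ s, ¬ G.Adj a b)).filter (fun s => v ∉ s),
      (-1 : ℤ) ^ s.card = 0 := by
    refine Finset.sum_involution (fun s _ => if u ∈ s then s.erase u else insert u s)
      ?_ ?_ ?_ ?_
    · -- f s + f (g s) = 0
      intro s hs
      by_cases hu : u ∈ s
      · rw [if_pos hu, Finset.card_erase_of_mem hu]
        have hc : 1 ≤ s.card := Finset.card_pos.mpr ⟨u, hu⟩
        obtain ⟨c, hc'⟩ : ∃ c, s.card = c + 1 := ⟨s.card - 1, by omega⟩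
        rw [hc', Nat.add_sub_cancel, pow_succ]
        ring
      · rw [if_neg hu, Finset.card_insert_of_notMem hu, pow_succ]
        ring
    · -- g s ≠ s
      intro s hs _
      by_cases hu : u ∈ s
      · rw [if_pos hu]
        intro heq
        apply Finset.notMem_erase u s
        rw [heq]; exact hu
      · rw [if_neg hu]
        intro heq
        apply hu
        rw [← heq]
        exact Finset.mem_insert_self u s
    · -- g s ∈ the filtered set
      intro s hs
      simp only [Finset.mem_filter, Finset.mem_univ, true_and] at hs ⊢
      obtain ⟨hind, hv⟩ := hs
      by_cases hu : u ∈ s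
      · rw [if_pos hu]
        refine ⟨fun a ha b hb => hind a (Finset.mem_of_mem_erase ha)
          b (Finset.mem_of_mem_erase hb), fun hvmem => hv (Finset.mem_of_mem_erase hvmem)⟩
      · rw [if_neg hu]
        constructor
        · intro a ha b hb hab
          rcases Finset.mem_insert.mp ha with rfl | ha'
          · rcases Finset.mem_insert.mp hb with rfl | hb'
            · exact G.irrefl hab
            · exact hv ((huniq b hab) ▸ hb')
          · rcases Finset.mem_insert.mp hb with rfl | hb'
            · exact hv ((huniq a hab.symm) ▸ ha')
            · exact hind a ha' b hb' hab
        · intro hvmem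
          rcases Finset.mem_insert.mp hvmem with rfl | hv'
          · exact huv rfl
          · exact hv hv'
    · -- g (g s) = s
      intro s hs
      by_cases hu : u ∈ s
      · rw [if_pos hu, if_neg (Finset.notMem_erase u s)]
        exact Finset.insert_erase hu
      · rw [if_neg hu, if_pos (Finset.mem_insert_self u s)]
        exact Finset.erase_insert hu
  rw [hcancel, add_zero]
  have hkey : ∑ s ∈ (Finset.univ.filter
      (fun s : Finset V => ∀ a ∈ s, ∀ b ∈ s, ¬ G.Adj a b)).filter (fun s => v ∈ s),
      (-1 : ℤ) ^ s.card
      = - wittenInd (G.induce U) := by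
    rw [wittenInd_eq, ← Finset.sum_neg_distrib]
    refine Finset.sum_bij' (fun s _ => (s.erase v).subtype (· ∈ U))
      (fun t _ => insert v (t.map (Function.Embedding.subtype (· ∈ U))))
      ?_ ?_ ?_ ?_ ?_
    · intro s hs
      simp only [Finset.mem_filter, Finset.mem_univ, true_and] at hs ⊢
      intro a ha b hb hab
      rw [Finset.mem_subtype] at ha hb
      exact hs.1 a (Finset.mem_of_mem_erase ha) b (Finset.mem_of_mem_erase hb) hab
    · intro t ht
      simp only [Finset.mem_filter, Finset.mem_univ, true_and] at ht ⊢
      refine ⟨?_, Finset.mem_insert_self v _⟩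
      intro a ha b hb hab
      rcases Finset.mem_insert.mp ha with rfl | ha'
      · rcases Finset.mem_insert.mp hb with rfl | hb'
        · exact G.irrefl hab
        · obtain ⟨⟨b', hb'U⟩, _, rfl⟩ := Finset.mem_map.mp hb'
          exact ((hUmem b').mp hb'U).1 hab
      · obtain ⟨⟨a', ha'U⟩, ha't, rfl⟩ := Finset.mem_map.mp ha'
        rcases Finset.mem_insert.mp hb with rfl | hb'
        · exact ((hUmem a').mp ha'U).1 hab.symm
        · obtain ⟨⟨b', hb'U⟩, hb't, rfl⟩ := Finset.mem_map.mp hb'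
          exact ht ⟨a', ha'U⟩ ha't ⟨b', hb'U⟩ hb't hab
    · intro s hs
      simp only [Finset.mem_filter, Finset.mem_univ, true_and] at hs
      obtain ⟨hind, hv⟩ := hs
      have hsub : ∀ x ∈ s.erase v, x ∈ U := by
        intro x hx
        have hxs := Finset.mem_of_mem_erase hx
        have hxv := Finset.ne_of_mem_erase hx
        rw [hUmem]
        exact ⟨hind v hv x hxs, hxv⟩
      rw [Finset.subtype_map, Finset.filter_true_of_mem hsub, Finset.insert_erase hv]
    · intro t ht
      have hvnot : v ∉ t.map (Function.Embedding.subtype (· ∈ U)) := by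
        intro hmem
        obtain ⟨⟨v', hv'U⟩, -, heq⟩ := Finset.mem_map.mp hmem
        simp only [Function.Embedding.coe_subtype] at heq
        subst heq
        exact hvU hv'U
      rw [Finset.erase_insert hvnot]
      ext a
      rw [Finset.mem_subtype, Finset.mem_map]
      constructor
      · rintro ⟨b, hb, hba⟩
        have : b = a := Subtype.ext hba
        exact this ▸ hb
      · intro ha
        exact ⟨a, ha, rfl⟩
    · intro s hs
      simp only [Finset.mem_filter, Finset.mem_univ, true_and] at hs
      obtain ⟨hind, hv⟩ := hs
      have hsub : ∀ x ∈ s.erase v, x ∈ U := by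
        intro x hx
        have hxs := Finset.mem_of_mem_erase hx
        have hxv := Finset.ne_of_mem_erase hx
        rw [hUmem]
        exact ⟨hind v hv x hxs, hxv⟩
      have hcard : ((s.erase v).subtype (· ∈ U)).card = s.card - 1 := by
        rw [Finset.card_subtype, Finset.filter_true_of_mem hsub,
          Finset.card_erase_of_mem hv]
      rw [hcard]
      have hc : 1 ≤ s.card := Finset.card_pos.mpr ⟨v, hv⟩
      obtain ⟨c, hc'⟩ : ∃ c, s.card = c + 1 := ⟨s.card - 1, by omega⟩
      rw [hc', Nat.add_sub_cancel, pow_succ]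
      ring
  rw [hkey]

end
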